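/- A bi-infinite sequence (a_h)_{h ∈ ℤ} with values in {+1,-1} is a complete folding sequence (i.e., every finite subword of it is a subword of some n-folding sequence) if and only if for every n ∈ ℕ there exists h_n ∈ ℤ such that a_{h_n + k·2^{n+1}} = (-1)^k a_{h_n} for every k ∈ ℤ. -/

import Mathlib

/-- Reversal-with-negation of a finite ±1 word. -/
def negRev (S : List ℤ) : List ℤ := (S.map (fun x => -x)).reverse

/-- `IsFold n S` : `S` is an `n`-folding sequence. -/
inductive IsFold : ℕ → List ℤ → Prop
  | zero : IsFold 0 []
  | succ (n : ℕ) (S : List ℤ) (ε : ℤ) : IsFold n S → (ε = 1 ∨ ε = -1) →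
      IsFold (n + 1) (negRev S ++ ε :: S)

/-- The subword `(a (h+1), …, a (h+t))` of a bi-infinite sequence. -/
def subwordAt (a : ℤ → ℤ) (h : ℤ) (t : ℕ) : List ℤ :=
  (List.range t).map fun i => a (h + 1 + (i : ℤ))

/-- `T` is a finite subword of the bi-infinite sequence `a`. -/
def IsSubword (a : ℤ → ℤ) (T : List ℤ) : Prop := ∃ h : ℤ, T = subwordAt a h T.length

/-- A finite folding sequence: a subword of some `n`-folding sequence. -/
def IsFiniteFold (T : List ℤ) : Prop := ∃ n S, IsFold n S ∧ T <:+: S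

/-- The sequence takes values in `{+1, -1}`. -/
def PM (a : ℤ → ℤ) : Prop := ∀ h : ℤ, a h = 1 ∨ a h = -1

/-- `a (hn + k·2^(n+1)) = (-1)^k · a hn` for all `k`. -/
def AltProp (a : ℤ → ℤ) (n : ℕ) (hn : ℤ) : Prop :=
  ∀ k : ℤ, a (hn + k * 2 ^ (n + 1)) = if Even k then a hn else -a hn

/-- A complete folding sequence (alternation characterization). -/
def CompleteFold (a : ℤ → ℤ) : Prop := PM a ∧ ∀ n : ℕ, ∃ hn : ℤ, AltProp a n hn

/-- Rotate a direction left (`η = 1`) or right (otherwise). -/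
def rot (d : ℤ × ℤ) (η : ℤ) : ℤ × ℤ := if η = 1 then (-d.2, d.1) else (d.2, -d.1)

/-- Unit lattice direction. -/
def IsUnitVec (d : ℤ × ℤ) : Prop := d = (1, 0) ∨ d = (0, 1) ∨ d = (-1, 0) ∨ d = (0, -1)

/-- Direction of the `i`-th step of the curve with turn word `η`. -/
def dirAt (d0 : ℤ × ℤ) (η : List ℤ) (i : ℕ) : ℤ × ℤ := (η.take i).foldl rot d0

/-- `i`-th vertex of the curve started at `X0` with initial direction `d0`. -/
def vertexAt (X0 d0 : ℤ × ℤ) (η : List ℤ) (i : ℕ) : ℤ × ℤ :=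
  X0 + ∑ j ∈ Finset.range i, dirAt d0 η j

/-- `i`-th (unordered) unit edge of the curve. -/
def edgeAt (X0 d0 : ℤ × ℤ) (η : List ℤ) (i : ℕ) : Sym2 (ℤ × ℤ) :=
  s(vertexAt X0 d0 η i, vertexAt X0 d0 η (i + 1))

/-- A complete folding curve, given by its vertex function. -/
def IsCFCurve (V : ℤ → ℤ × ℤ) : Prop :=
  (∀ i : ℤ, IsUnitVec (V (i + 1) - V i)) ∧
  ∃ η : ℤ → ℤ, CompleteFold η ∧ ∀ i : ℤ, V (i + 2) - V (i + 1) = rot (V (i + 1) - V i) (η i)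

/-- Two bi-infinite curves are disjoint: no common unit edge, and at every common
lattice point the four incident traversed edges point in four distinct directions
(the curves do not cross). -/
def CurvesDisjoint (V W : ℤ → ℤ × ℤ) : Prop :=
  (∀ i j : ℤ, s(V i, V (i + 1)) ≠ s(W j, W (j + 1))) ∧
  ∀ i j : ℤ, V i = W j →
    List.Pairwise (· ≠ ·) [V (i - 1) - V i, V (i + 1) - V i, W (j - 1) - W j, W (j + 1) - W j]



def sg (k : ℕ) : ℤ := if Even k then 1 else -1

lemma sg_mul_self (k : ℕ) : sg k * sg k = 1 := by unfold sg; split_ifs <;> norm_num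

lemma sg_add (a b : ℕ) : sg (a + b) = sg a * sg b := by
  unfold sg
  by_cases ha : Even a <;> by_cases hb : Even b <;>
    simp [Nat.even_add, ha, hb]

lemma negRev_length (S : List ℤ) : (negRev S).length = S.length := by simp [negRev]

lemma negRev_getD (S : List ℤ) (i : ℕ) (hi : i < S.length) :
    (negRev S).getD i 0 = -(S.getD (S.length - 1 - i) 0) := by
  have h1 : i < (negRev S).length := by rw [negRev_length]; exact hi
  rw [List.getD_eq_getElem _ _ h1, List.getD_eq_getElem _ _ (by omega)]
  simp [negRev, List.getElem_reverse]

def foldSeq (g : ℕ → ℤ) : ℕ → List ℤ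
  | 0 => []
  | n+1 => negRev (foldSeq g n) ++ g n :: foldSeq g n

lemma foldSeq_length (g : ℕ → ℤ) (n : ℕ) : (foldSeq g n).length = 2^n - 1 := by
  induction n with
  | zero => rfl
  | succ n ih =>
    have h1 : 1 ≤ 2^n := Nat.one_le_two_pow
    simp [foldSeq, negRev_length, ih, pow_succ]; omega

lemma getD_mid (A B : List ℤ) (ε : ℤ) : (A ++ ε :: B).getD A.length 0 = ε := by
  rw [List.getD_append_right _ _ _ _ le_rfl]; simp

lemma getD_right (A B : List ℤ) (ε : ℤ) (p : ℕ) (hp : A.length < p) :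
    (A ++ ε :: B).getD p 0 = B.getD (p - A.length - 1) 0 := by
  rw [List.getD_append_right _ _ _ _ (le_of_lt hp)]
  obtain ⟨q, hq⟩ := Nat.exists_eq_add_of_lt hp
  subst hq
  have : A.length + q + 1 - A.length = q + 1 := by omega
  rw [this]
  simp

def AltW (S : List ℤ) (n : ℕ) : Prop :=
  ∀ m, m < n → ∀ k, 2^m - 1 + k * 2^(m+1) < S.length →
    S.getD (2^m - 1 + k * 2^(m+1)) 0 = sg k * S.getD (2^m - 1) 0

lemma foldSeq_succ (g : ℕ → ℤ) (n : ℕ) :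
    foldSeq g (n+1) = negRev (foldSeq g n) ++ g n :: foldSeq g n := rfl

lemma sg_one : sg 1 = -1 := by simp [sg]

lemma fold_alt (g : ℕ → ℤ) (n : ℕ) : AltW (foldSeq g n) n := by
  induction n with
  | zero => intro m hm; omega
  | succ n ih =>
    intro m hm k hk
    have hF := foldSeq_length g n
    have hL : (negRev (foldSeq g n)).length = 2^n - 1 := by rw [negRev_length, hF]
    rw [foldSeq_length] at hk
    rw [foldSeq_succ]
    rcases Nat.lt_or_ge m n with hmn | hmn
    · -- m < n
      have hQ : (2:ℕ)^(m+1) = 2*2^m := by rw [pow_succ]; ring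
      have hP1 : 1 ≤ (2:ℕ)^m := Nat.one_le_two_pow
      obtain ⟨E, hE1, hEP⟩ : ∃ E, 1 ≤ E ∧ (2:ℕ)^n = E * (2*2^m) :=
        ⟨2^(n-m-1), Nat.one_le_two_pow, by rw [← hQ, ← pow_add]; congr 1; omega⟩
      have h2n1 : (2:ℕ)^(n+1) = 2*(E*(2*2^m)) := by rw [pow_succ, hEP]; ring
      rw [hQ] at hk ⊢
      have hbE : (E-1)*(2*2^m) + (2*2^m) = E*(2*2^m) := by
        rw [← Nat.add_one_mul]; congr 1; omega
      have hEm : (2:ℕ)^m ≤ E * (2*2^m) := by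
        calc (2:ℕ)^m ≤ 1*(2*2^m) := by omega
        _ ≤ E * (2*2^m) := Nat.mul_le_mul_right _ hE1
      have hbase : (negRev (foldSeq g n) ++ g n :: foldSeq g n).getD (2^m - 1) 0
          = -(sg (E-1) * (foldSeq g n).getD (2^m - 1) 0) := by
        rw [List.getD_append _ _ _ _ (by omega), negRev_getD _ _ (by omega), hF]
        have hidx : 2^n - 1 - 1 - (2^m - 1) = 2^m - 1 + (E-1) * (2*2^m) := by omega
        rw [hidx, ← hQ]
        rw [ih m hmn (E-1) (by rw [hF, hQ]; omega)]
      rcases lt_trichotomy (2^m - 1 + k * (2*2^m)) (2^n - 1) with hlt | heq | hgt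
      · -- left half
        have hkE : k < E := by
          by_contra hc
          push_neg at hc
          have := Nat.mul_le_mul_right (2*2^m) hc
          omega
        have hsum : (E-1-k)*(2*2^m) + k*(2*2^m) + (2*2^m) = E*(2*2^m) := by
          rw [← Nat.add_mul, ← Nat.add_one_mul]; congr 1; omega
        rw [List.getD_append _ _ _ _ (by omega), negRev_getD _ _ (by omega), hF]
        have hidx : 2^n - 1 - 1 - (2^m - 1 + k * (2*2^m))
            = 2^m - 1 + (E-1-k) * (2*2^m) := by omega
        rw [hidx, ← hQ]
        rw [ih m hmn (E-1-k) (by rw [hF, hQ]; omega), hbase]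
        have h1 : sg (E-1) = sg (E-1-k) * sg k := by
          rw [← sg_add]; congr 1; omega
        rw [h1]
        linear_combination (sg (E-1-k) * (foldSeq g n).getD (2^m - 1) 0) * sg_mul_self k
      · -- middle : impossible
        exfalso
        have e2 : E*(2*2^m) = (2*E)*2^m := by ring
        have e3 : k*(2*2^m) = 2*(k*2^m) := by ring
        have e1 : (2:ℕ)^m + 2*(k*2^m) = (2*k+1)*2^m := by ring
        have e4 : (2*k+1)*2^m = (2*E)*2^m := by omega
        have := Nat.eq_of_mul_eq_mul_right (show 0 < (2:ℕ)^m by omega) e4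
        omega
      · -- right half
        have hkE : E ≤ k := by
          by_contra hc
          push_neg at hc
          have h5 : k ≤ E - 1 := by omega
          have := Nat.mul_le_mul_right (2*2^m) h5
          omega
        have hsum : (k-E)*(2*2^m) + E*(2*2^m) = k*(2*2^m) := by
          rw [← Nat.add_mul]; congr 1; omega
        rw [getD_right _ _ _ _ (by rw [hL]; omega)]
        have hidx : 2^m - 1 + k * (2*2^m) - (negRev (foldSeq g n)).length - 1
            = 2^m - 1 + (k-E) * (2*2^m) := by rw [hL]; omega
        rw [hidx, ← hQ]
        rw [ih m hmn (k-E) (by rw [hF, hQ]; omega), hbase]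
        have h1 : sg k = sg (k-E) * sg E := by rw [← sg_add]; congr 1; omega
        have h2 : sg E = sg (E-1) * sg 1 := by rw [← sg_add]; congr 1; omega
        rw [h1, h2, sg_one]
        linear_combination
          (-(sg (k-E) * (foldSeq g n).getD (2^m - 1) 0)) * sg_mul_self (E-1)
    · -- m = n
      have hmeq : m = n := by omega
      subst hmeq
      have hk0 : k = 0 := by
        by_contra hc
        have h5 : 1 ≤ k := by omega
        have := Nat.mul_le_mul_right (2^(m+1)) h5
        omega
      subst hk0
      simp [sg]


lemma getD_drop' (l : List ℤ) (i j : ℕ) (h : i + j < l.length) :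
    (l.drop i).getD j 0 = l.getD (i+j) 0 := by
  rw [List.getD_eq_getElem _ _ (by simp [List.length_drop]; omega), List.getD_eq_getElem _ _ h]
  simp [List.getElem_drop]

lemma alt_fold (n : ℕ) (S : List ℤ) (hlen : S.length = 2^n - 1)
    (hpm : ∀ x ∈ S, x = 1 ∨ x = -1) (halt : AltW S n) : IsFold n S := by
  induction n generalizing S with
  | zero =>
    have : S = [] := List.eq_nil_of_length_eq_zero (by simpa using hlen)
    rw [this]; exact IsFold.zero
  | succ n ih =>
    have h2 : (2:ℕ)^(n+1) = 2*2^n := by rw [pow_succ]; ring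
    have hn1 : 1 ≤ (2:ℕ)^n := Nat.one_le_two_pow
    have hBlen : (S.drop (2^n)).length = 2^n - 1 := by rw [List.length_drop, hlen]; omega
    have hrefl : ∀ i, i < 2^n - 1 → S.getD i 0 = -(S.getD (2^(n+1) - 2 - i) 0) := by
      intro i hi
      obtain ⟨m, o, ho, hmo⟩ := Nat.exists_eq_two_pow_mul_odd (n := i+1) (by omega)
      obtain ⟨k, hko⟩ := ho
      subst hko
      have hP1 : 1 ≤ (2:ℕ)^m := Nat.one_le_two_pow
      have hip : i = 2^m - 1 + k*(2*2^m) := by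
        have e1 : 2^m*(2*k+1) = 2^m + 2*(k*2^m) := by ring
        have e2 : k*(2*2^m) = 2*(k*2^m) := by ring
        omega
      have hmn : m < n := by
        have h3 : (2:ℕ)^m ≤ 2^m*(2*k+1) := Nat.le_mul_of_pos_right _ (by omega)
        have h4 : (2:ℕ)^m < 2^n := by omega
        exact (Nat.pow_lt_pow_iff_right (by norm_num)).mp h4
      have hQ : (2:ℕ)^(m+1) = 2*2^m := by rw [pow_succ]; ring
      obtain ⟨E, hE1, hEP⟩ : ∃ E, 1 ≤ E ∧ (2:ℕ)^n = E * (2*2^m) :=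
        ⟨2^(n-m-1), Nat.one_le_two_pow, by rw [← hQ, ← pow_add]; congr 1; omega⟩
      have hkE : k < E := by
        by_contra hc
        push_neg at hc
        have := Nat.mul_le_mul_right (2*2^m) hc
        omega
      have hsum : (2*E-1-k)*(2*2^m) + k*(2*2^m) + (2*2^m) = 2*E*(2*2^m) := by
        rw [← Nat.add_mul, ← Nat.add_one_mul]; congr 1; omega
      have h2n1 : (2:ℕ)^(n+1) = 2*E*(2*2^m) := by rw [h2, hEP]; ring_nf
      have ha1 := halt m (by omega) k (by rw [hlen, hQ]; omega)
      have ha2 := halt m (by omega) (2*E-1-k) (by rw [hlen, hQ]; omega)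
      rw [hQ] at ha1 ha2
      rw [hip]
      have hidx : 2^(n+1) - 2 - (2^m - 1 + k*(2*2^m)) = 2^m - 1 + (2*E-1-k)*(2*2^m) := by
        omega
      rw [hidx, ha1, ha2]
      unfold sg
      rcases Nat.even_or_odd k with hk | hk
      · rw [if_pos hk, if_neg (by rw [Nat.even_iff] at hk ⊢; omega)]; ring
      · rw [if_neg (by rwa [Nat.not_even_iff_odd]),
          if_pos (by rw [Nat.odd_iff] at hk; rw [Nat.even_iff]; omega)]
        ring
    have hBgetD : ∀ p, p < 2^n - 1 → (S.drop (2^n)).getD p 0 = S.getD (2^n + p) 0 := by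
      intro p hp; exact getD_drop' S _ _ (by omega)
    have hBalt : AltW (S.drop (2^n)) n := by
      intro m hm k hk
      rw [hBlen] at hk
      have hP1 : 1 ≤ (2:ℕ)^m := Nat.one_le_two_pow
      have hQ : (2:ℕ)^(m+1) = 2*2^m := by rw [pow_succ]; ring
      rw [hQ] at hk
      obtain ⟨E, hE1, hEP⟩ : ∃ E, 1 ≤ E ∧ (2:ℕ)^n = E * (2*2^m) :=
        ⟨2^(n-m-1), Nat.one_le_two_pow, by rw [← hQ, ← pow_add]; congr 1; omega⟩
      have hEm : (2:ℕ)^m ≤ E*(2*2^m) := by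
        have := Nat.mul_le_mul_right (2*2^m) hE1
        omega
      have hsum : (k+E)*(2*2^m) = k*(2*2^m) + E*(2*2^m) := Nat.add_mul k E (2*2^m)
      have h2n1 : (2:ℕ)^(n+1) = 2*(E*(2*2^m)) := by rw [h2, hEP]
      have ha1 := halt m (by omega) (k+E) (by rw [hlen, hQ]; omega)
      have ha2 := halt m (by omega) E (by rw [hlen, hQ]; omega)
      rw [hQ] at ha1 ha2 ⊢
      rw [hBgetD (2^m - 1 + k*(2*2^m)) (by omega), hBgetD (2^m - 1) (by omega)]
      have i1 : 2^n + (2^m - 1 + k*(2*2^m)) = 2^m - 1 + (k+E)*(2*2^m) := by omega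
      have i2 : 2^n + (2^m - 1) = 2^m - 1 + E*(2*2^m) := by omega
      rw [i1, i2, ha1, ha2, sg_add]
      ring
    have hB := ih (S.drop (2^n)) hBlen (fun x hx => hpm x (List.drop_subset _ _ hx)) hBalt
    have hmid : 2^n - 1 < S.length := by rw [hlen]; omega
    have hε : S.getD (2^n - 1) 0 = 1 ∨ S.getD (2^n - 1) 0 = -1 := by
      rw [List.getD_eq_getElem _ _ hmid]
      exact hpm _ (List.getElem_mem _)
    have htake : S.take (2^n - 1) = negRev (S.drop (2^n)) := by
      apply List.ext_getElem
      · rw [List.length_take, negRev_length, hBlen, hlen]; omega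
      · intro i h1 h2
        have hi : i < 2^n - 1 := by rw [List.length_take] at h1; omega
        rw [List.getElem_take]
        have g1 : S[i] = S.getD i 0 := (List.getD_eq_getElem _ _ (by omega)).symm
        have g2 : (negRev (S.drop (2^n)))[i] = (negRev (S.drop (2^n))).getD i 0 :=
          (List.getD_eq_getElem _ _ h2).symm
        rw [g1, g2, negRev_getD _ _ (by rw [hBlen]; omega), hBlen]
        rw [hBgetD _ (by omega)]
        have hidx2 : 2^n + (2^n - 1 - 1 - i) = 2^(n+1) - 2 - i := by omega
        rw [hidx2]
        exact hrefl i hi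
    have hS : S = negRev (S.drop (2^n)) ++ S.getD (2^n - 1) 0 :: S.drop (2^n) := by
      conv_lhs => rw [← List.take_append_drop (2^n - 1) S]
      rw [htake]
      congr 1
      rw [List.drop_eq_getElem_cons (show 2^n - 1 < S.length by omega)]
      congr 1
      · exact (List.getD_eq_getElem _ _ (by omega)).symm
      · congr 1; omega
    rw [hS]
    exact IsFold.succ n _ _ hB hε

lemma foldSeq_congr (g g' : ℕ → ℤ) (n : ℕ) (h : ∀ m, m < n → g m = g' m) :
    foldSeq g n = foldSeq g' n := by
  induction n with
  | zero => rfl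
  | succ n ih =>
    rw [foldSeq_succ, foldSeq_succ, ih (fun m hm => h m (by omega)), h n (by omega)]

lemma isFold_exists (n : ℕ) (S : List ℤ) (h : IsFold n S) :
    ∃ g : ℕ → ℤ, (∀ m, g m = 1 ∨ g m = -1) ∧ S = foldSeq g n := by
  induction h with
  | zero => exact ⟨fun _ => 1, fun _ => Or.inl rfl, rfl⟩
  | succ n S ε hS hε ih =>
    obtain ⟨g, hg, rfl⟩ := ih
    refine ⟨Function.update g n ε, ?_, ?_⟩
    · intro m
      rcases eq_or_ne m n with rfl | hm
      · simpa using hε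
      · simpa [Function.update_of_ne hm] using hg m
    · rw [foldSeq_succ,
        foldSeq_congr g (Function.update g n ε) n
          (fun m hm => (Function.update_of_ne (by omega) _ _).symm),
        Function.update_self]


lemma coeM_list (f : ℤ → ℤ) (l : List ℕ) :
    List.map f (l.flatMap fun a => [(a : ℤ)]) = l.map (fun i : ℕ => f (i : ℤ)) := by
  induction l with
  | nil => rfl
  | cons x l ih => simp_all

lemma subwordAt_eq (a : ℤ → ℤ) (h : ℤ) (t : ℕ) :
    subwordAt a h t = (List.range t).map (fun i : ℕ => a (h + 1 + (i : ℤ))) := by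
  unfold subwordAt
  simp
  induction (List.range t) <;> simp_all

lemma subwordAt_length (a : ℤ → ℤ) (h : ℤ) (t : ℕ) : (subwordAt a h t).length = t := by
  rw [subwordAt_eq, List.length_map, List.length_range]

lemma subwordAt_getD (a : ℤ → ℤ) (h : ℤ) (t : ℕ) (i : ℕ) (hi : i < t) :
    (subwordAt a h t).getD i 0 = a (h + 1 + i) := by
  rw [subwordAt_eq,
    List.getD_eq_getElem _ _ (by rw [List.length_map, List.length_range]; exact hi),
    List.getElem_map]
  congr 2
  rw [List.getElem_range]

lemma subwordAt_mem (a : ℤ → ℤ) (h : ℤ) (t : ℕ) (x : ℤ) (hx : x ∈ subwordAt a h t) :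
    ∃ p : ℤ, x = a p := by
  rw [subwordAt_eq] at hx
  obtain ⟨i, _, rfl⟩ := List.mem_map.mp hx
  exact ⟨_, rfl⟩

lemma subwordAt_add (a : ℤ → ℤ) (c : ℤ) (s u : ℕ) :
    subwordAt a c (s+u) = subwordAt a c s ++ subwordAt a (c+s) u := by
  rw [subwordAt_eq, subwordAt_eq, subwordAt_eq, List.range_add, List.map_append, List.map_map]
  congr 1
  apply List.map_congr_left
  intro i _
  simp only [Function.comp_apply]
  congr 1
  push_cast
  ring

lemma subwordAt_infix (a : ℤ → ℤ) (c h : ℤ) (t L : ℕ) (h1 : c ≤ h)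
    (h2 : h + t ≤ c + L) : subwordAt a h t <:+: subwordAt a c L := by
  have hdz : ((h - c).toNat : ℤ) = h - c := Int.toNat_of_nonneg (by omega)
  have hdt : (h - c).toNat + t ≤ L := by omega
  have hL : L = (h - c).toNat + t + (L - (h - c).toNat - t) := by omega
  rw [hL, subwordAt_add, subwordAt_add]
  have hch : c + ((h - c).toNat : ℤ) = h := by omega
  rw [hch]
  exact List.infix_append _ _ _



section NT

variable {a : ℤ → ℤ} {H : ℕ → ℤ}

lemma excl (hpm : PM a) (hH : ∀ n, AltProp a n (H n)) (l m : ℕ) (hlm : l < m) :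
    ¬ ((2:ℤ)^(l+1) ∣ H m - H l) := by
  rintro ⟨j, hj⟩
  have hpow : (2:ℤ)^(l+1) * 2^(m-l) = 2^(m+1) := by
    rw [← pow_add]; congr 1; omega
  have heven : Even ((2:ℤ)^(m-l)) := by
    have h5 : m - l = (m-l-1)+1 := by omega
    rw [h5, pow_succ]
    exact (Int.even_mul).mpr (Or.inr even_two)
  have h1 : a (H m + 1 * 2^(m+1)) = -a (H m) := by
    rw [hH m 1, if_neg (by decide)]
  have harg : H m + 1 * 2^(m+1) = H l + (j + 2^(m-l)) * 2^(l+1) := by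
    linear_combination hj - hpow
  have hHm : H m = H l + j * 2^(l+1) := by linear_combination hj
  have h2 := hH l (j + 2^(m-l))
  have h3 := hH l j
  rw [← harg] at h2
  rw [← hHm] at h3
  have hpar : Even (j + 2^(m-l)) ↔ Even j := by
    rw [Int.even_add]
    simp [heven]
  by_cases hje : Even j
  · rw [if_pos (hpar.mpr hje)] at h2
    rw [if_pos hje] at h3
    rcases hpm (H m) with h | h <;> omega
  · rw [if_neg (fun hc => hje (hpar.mp hc))] at h2
    rw [if_neg hje] at h3
    rcases hpm (H m) with h | h <;> omega

lemma dvd_H (hpm : PM a) (hH : ∀ n, AltProp a n (H n)) :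
    ∀ l m, l ≤ m → (2:ℤ)^l ∣ H m - H l := by
  intro l
  induction l with
  | zero => intro m _; simpa using one_dvd _
  | succ l ih =>
    intro m hm
    obtain ⟨u, hu⟩ := ih m (by omega)
    obtain ⟨v, hv⟩ := ih (l+1) (by omega)
    have hu' : ¬ Even u := by
      rintro ⟨w, hw⟩
      exact excl hpm hH l m (by omega) ⟨w, by rw [hu, hw, pow_succ]; ring⟩
    have hv' : ¬ Even v := by
      rintro ⟨w, hw⟩
      exact excl hpm hH l (l+1) (by omega) ⟨w, by rw [hv, hw, pow_succ]; ring⟩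
    have huv : Even (u - v) := Int.even_sub.mpr (by tauto)
    obtain ⟨w, hw⟩ := huv
    exact ⟨w, by
      rw [show H m - H (l+1) = (H m - H l) - (H (l+1) - H l) by ring, hu, hv, pow_succ]
      linear_combination ((2:ℤ)^l) * hw⟩

lemma cong_H (hpm : PM a) (hH : ∀ n, AltProp a n (H n)) (l m : ℕ) (hlm : l < m) :
    (2:ℤ)^(l+1) ∣ H m - (H l + 2^l) := by
  obtain ⟨u, hu⟩ := dvd_H hpm hH l m (le_of_lt hlm)
  have hu' : ¬ Even u := by
    rintro ⟨w, hw⟩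
    exact excl hpm hH l m hlm ⟨w, by rw [hu, hw, pow_succ]; ring⟩
  obtain ⟨w, hw⟩ := Int.not_even_iff_odd.mp hu'
  exact ⟨w, by
    rw [show H m - (H l + 2^l) = (H m - H l) - 2^l by ring, hu, pow_succ]
    linear_combination ((2:ℤ)^l) * hw⟩

lemma window (hpm : PM a) (hH : ∀ n, AltProp a n (H n)) (n : ℕ) (c : ℤ)
    (hc : ∀ m, m < n → (2:ℤ)^(m+1) ∣ c + 2^m - H m) :
    IsFold (n+1) (subwordAt a c (2^(n+1) - 1)) := by
  apply alt_fold
  · exact subwordAt_length _ _ _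
  · intro x hx
    obtain ⟨p, rfl⟩ := subwordAt_mem _ _ _ _ hx
    exact hpm p
  · intro m hm k hk
    rw [subwordAt_length] at hk
    have hP1 : 1 ≤ (2:ℕ)^m := Nat.one_le_two_pow
    rw [subwordAt_getD _ _ _ _ hk, subwordAt_getD _ _ _ _ (by omega)]
    have hc1 : ((2^m - 1 + k*2^(m+1) : ℕ) : ℤ) = 2^m - 1 + (k:ℤ)*2^(m+1) := by
      push_cast [Nat.cast_sub hP1]
      ring
    have hc2 : ((2^m - 1 : ℕ) : ℤ) = 2^m - 1 := by
      push_cast [Nat.cast_sub hP1]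
      ring
    rcases Nat.lt_or_ge m n with hmn | hmn
    · obtain ⟨j, hj⟩ := hc m hmn
      have e1 : c + 1 + ((2^m - 1 + k*2^(m+1) : ℕ) : ℤ) = H m + (j + k) * 2^(m+1) := by
        rw [hc1]; linear_combination hj
      have e2 : c + 1 + ((2^m - 1 : ℕ) : ℤ) = H m + j * 2^(m+1) := by
        rw [hc2]; linear_combination hj
      rw [e1, e2, hH m (j+k), hH m j]
      by_cases hje : Even j <;> by_cases hke : Even k <;>
        simp [sg, hje, hke, Int.even_add, Int.even_coe_nat]
    · have hmeq : m = n := by omega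
      subst hmeq
      have h2 : (2:ℕ)^(m+1) = 2*2^m := by rw [pow_succ]; ring
      have hk0 : k = 0 := by
        by_contra hc0
        have := Nat.le_mul_of_pos_left (2^(m+1)) (show 0 < k by omega)
        omega
      subst hk0
      norm_num [sg]

end NT



lemma main_mpr (a : ℤ → ℤ) (hpm : PM a) (hA : ∀ n : ℕ, ∃ hn : ℤ, AltProp a n hn) :
    ∀ T : List ℤ, IsSubword a T → IsFiniteFold T := by
  choose H hH using hA
  rintro T ⟨h, hT⟩
  set t := T.length with ht
  have key : ∀ (n : ℕ), 1 ≤ n → ∃ c : ℤ, c ≤ h ∧ h < c + 2^n ∧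
      ∀ m, m < n → (2:ℤ)^(m+1) ∣ c + 2^m - H m := by
    intro n hn1
    have h0 : (0:ℤ) < 2^n := by positivity
    have hmod := Int.mul_ediv_add_emod (h - (H (n-1) - 2^(n-1))) (2^n)
    have hr1 : 0 ≤ (h - (H (n-1) - 2^(n-1))) % 2^n := Int.emod_nonneg _ (by omega)
    have hr2 : (h - (H (n-1) - 2^(n-1))) % 2^n < 2^n := Int.emod_lt_of_pos _ h0
    refine ⟨(H (n-1) - 2^(n-1)) + 2^n * ((h - (H (n-1) - 2^(n-1))) / 2^n),
      by omega, by omega, ?_⟩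
    intro m hm
    rcases eq_or_lt_of_le (show m ≤ n-1 by omega) with hmeq | hmlt
    · refine ⟨(h - (H (n-1) - 2^(n-1))) / 2^n, ?_⟩
      rw [show m+1 = n by omega, show m = n-1 by omega]
      ring
    · obtain ⟨u, hu⟩ := cong_H hpm hH m (n-1) (by omega)
      obtain ⟨v, hv⟩ := (pow_dvd_pow (2:ℤ) (show m+1 ≤ n-1 by omega))
      obtain ⟨w, hw⟩ := (pow_dvd_pow (2:ℤ) (show m+1 ≤ n by omega))
      refine ⟨u - v + w * ((h - (H (n-1) - 2^(n-1))) / 2^n) + 1, ?_⟩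
      linear_combination hu - hv + ((h - (H (n-1) - 2^(n-1))) / 2^n) * hw
  obtain ⟨c, hc1, hc2, hc3⟩ := key (t+1) (by omega)
  refine ⟨t+2, _, window hpm hH (t+1) c (by simpa using hc3), ?_⟩
  rw [hT]
  apply subwordAt_infix a c h t _ hc1
  have hcast : ((2^(t+2) - 1 : ℕ) : ℤ) = 2^(t+2) - 1 := by
    push_cast [Nat.cast_sub (Nat.one_le_two_pow (n := t+2))]
    ring
  have htlt : (t:ℤ) < 2^(t+1) := by
    exact_mod_cast Nat.lt_of_lt_of_le (Nat.lt_two_pow_self (n := t)) (Nat.pow_le_pow_right (by norm_num) (by omega))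
  have h23 : (2:ℤ)^(t+2) = 2*2^(t+1) := by ring
  have : ((2^(t+1+1) - 1 : ℕ) : ℤ) = 2^(t+2) - 1 := hcast
  omega

lemma sg_succ (k : ℕ) : sg (k+1) = -(sg k) := by
  unfold sg
  by_cases h : Even k <;> simp [Nat.even_add_one, h]

lemma stepA (a : ℤ → ℤ) (hF : ∀ T : List ℤ, IsSubword a T → IsFiniteFold T) (n : ℕ)
    (L : ℕ) : ∃ y : ℤ, 0 ≤ y ∧ y < 2^(n+1) ∧
      ∀ x : ℤ, x % 2^(n+1) = y → -(L:ℤ)*2^(n+1) ≤ x → x ≤ (L:ℤ)*2^(n+1) →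
        a (x + 2^(n+1)) = -a x := by
  obtain ⟨M, tt, hM, htt⟩ : ∃ M tt : ℕ, M = (L+2)*2^(n+1) ∧ tt = 2*M := ⟨_, _, rfl, rfl⟩
  have hTsub : IsSubword a (subwordAt a (-(M:ℤ)) tt) :=
    ⟨-(M:ℤ), by rw [subwordAt_length]⟩
  obtain ⟨N, S, hS, hinf⟩ := hF _ hTsub
  obtain ⟨g, hg, rfl⟩ := isFold_exists N S hS
  have halt := fold_alt g N
  obtain ⟨pre, post, hSeq⟩ := hinf
  have hSlen := foldSeq_length g N
  have hTlen : (subwordAt a (-(M:ℤ)) tt).length = tt := subwordAt_length _ _ _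
  have hlen2 : pre.length + tt + post.length = 2^N - 1 := by
    have h5 := congrArg List.length hSeq
    simp only [List.length_append, hTlen, hSlen] at h5
    omega
  have hwin : ∀ i : ℕ, i < tt →
      a (-(M:ℤ) + 1 + i) = (foldSeq g N).getD (pre.length + i) 0 := by
    intro i hi
    rw [← hSeq, List.append_assoc,
      List.getD_append_right _ _ _ _ (Nat.le_add_right _ _), Nat.add_sub_cancel_left,
      List.getD_append _ _ _ _ (by rw [hTlen]; exact hi), subwordAt_getD _ _ _ _ hi]
  have hp2N : 1 ≤ (2:ℕ)^(n+1) := Nat.one_le_two_pow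
  have hMge : 2^(n+1) ≤ M := by
    have := Nat.le_mul_of_pos_left (2^(n+1)) (show 0 < L+2 by omega)
    omega
  have hN : n < N := by
    have h1 : (2:ℕ)^(n+1) < 2^N := by omega
    have := (Nat.pow_lt_pow_iff_right (a := 2) (by norm_num)).mp h1
    omega
  refine ⟨((2:ℤ)^n - pre.length - M) % 2^(n+1),
    Int.emod_nonneg _ (by positivity : (0:ℤ) < 2^(n+1)).ne',
    Int.emod_lt_of_pos _ (by positivity), ?_⟩
  intro x hx hx1 hx2
  have hMz : (M:ℤ) = ((L:ℤ)+2)*2^(n+1) := by rw [hM]; push_cast; ring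
  have hMe : ((L:ℤ)+2)*2^(n+1) = (L:ℤ)*2^(n+1) + 2*2^(n+1) := by ring
  have htz : ((tt:ℕ):ℤ) = 2*(M:ℤ) := by rw [htt]; push_cast; ring
  have hp2 : (1:ℤ) ≤ 2^(n+1) := by
    have : (0:ℤ) < 2^(n+1) := by positivity
    omega
  have hLL : (-(L:ℤ))*2^(n+1) = -((L:ℤ)*2^(n+1)) := by ring
  have hcp : ((2^(n+1):ℕ):ℤ) = 2^(n+1) := by push_cast; ring
  have hi0 : (0:ℤ) ≤ x + M - 1 := by omega
  have hi2 : x + (M:ℤ) - 1 + 2^(n+1) < tt := by omega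
  obtain ⟨i, hiZ⟩ : ∃ i : ℕ, (i:ℤ) = x + M - 1 := ⟨(x + M - 1).toNat, Int.toNat_of_nonneg hi0⟩
  have hilt : i < tt := by omega
  have hilt2 : i + 2^(n+1) < tt := by omega
  have hmd : Int.ModEq (2^(n+1)) x ((2:ℤ)^n - pre.length - M) := hx
  obtain ⟨z, hz⟩ := hmd.dvd
  obtain ⟨kz, hkz, hkz0⟩ : ∃ kz : ℤ, ((pre.length : ℤ) + i) - (2^n - 1) = 2^(n+1) * kz ∧
      0 ≤ kz := by
    have hkz' : ((pre.length:ℤ) + i) - (2^n - 1) = 2^(n+1) * (-z) := by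
      linear_combination -hz + hiZ
    refine ⟨-z, hkz', ?_⟩
    by_contra hneg
    push_neg at hneg
    have h6 : 2^(n+1) * (-z) ≤ 2^(n+1) * (-1) :=
      mul_le_mul_of_nonneg_left (by omega) (by positivity)
    have h7 : (0:ℤ) < 2^n := by positivity
    have h8 : (2:ℤ)^(n+1) = 2*2^n := by ring
    have h9 : (0:ℤ) ≤ (pre.length : ℤ) := by positivity
    omega
  obtain ⟨k, hkN⟩ : ∃ k : ℕ, (k:ℤ) = kz := ⟨kz.toNat, Int.toNat_of_nonneg hkz0⟩
  have hcast1 : ((2^n - 1 + k*2^(n+1) : ℕ):ℤ) = 2^n - 1 + (k:ℤ)*2^(n+1) := by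
    push_cast [Nat.cast_sub (Nat.one_le_two_pow (n := n))]
    ring
  have hidxN : pre.length + i = 2^n - 1 + k*2^(n+1) := by
    have h5 : ((pre.length + i : ℕ):ℤ) = ((2^n - 1 + k*2^(n+1) : ℕ):ℤ) := by
      rw [hcast1]
      push_cast
      linear_combination hkz - 2^(n+1) * hkN
    exact Nat.cast_injective h5
  have hb : (k+1)*2^(n+1) = k*2^(n+1) + 2^(n+1) := by ring
  have hidx2N : pre.length + (i + 2^(n+1)) = 2^n - 1 + (k+1)*2^(n+1) := by omega
  have ha1 := halt n hN k (by rw [hSlen]; omega)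
  have ha2 := halt n hN (k+1) (by rw [hSlen]; omega)
  have hax : a x = (foldSeq g N).getD (pre.length + i) 0 := by
    have h5 := hwin i hilt
    rw [show -(M:ℤ) + 1 + i = x by omega] at h5
    exact h5
  have hax2 : a (x + 2^(n+1)) = (foldSeq g N).getD (pre.length + (i + 2^(n+1))) 0 := by
    have h5 := hwin (i + 2^(n+1)) hilt2
    rw [show -(M:ℤ) + 1 + ((i + 2^(n+1) : ℕ):ℤ) = x + 2^(n+1) by push_cast; omega] at h5
    exact h5
  rw [hax, hax2, hidxN, hidx2N, ha1, ha2, sg_succ]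
  ring

lemma main_mp (a : ℤ → ℤ) (hF : ∀ T : List ℤ, IsSubword a T → IsFiniteFold T) (n : ℕ) :
    ∃ hn : ℤ, AltProp a n hn := by
  set P : ℤ → ℕ → Prop := fun y L =>
    ∀ x : ℤ, x % 2^(n+1) = y → -(L:ℤ)*2^(n+1) ≤ x → x ≤ (L:ℤ)*2^(n+1) →
      a (x + 2^(n+1)) = -a x with hP
  have mono : ∀ y L L', L' ≤ L → P y L → P y L' := by
    intro y L L' hLL hPL x hx h1 h2
    have hq : (0:ℤ) < 2^(n+1) := by positivity
    have hc : ((L':ℕ):ℤ) ≤ L := by exact_mod_cast hLL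
    refine hPL x hx ?_ ?_
    · nlinarith
    · nlinarith
  have hgood : ∃ y : ℤ, 0 ≤ y ∧ y < 2^(n+1) ∧ ∀ L, P y L := by
    by_contra hc
    push_neg at hc
    have hbad : ∀ y : ℤ, ∃ L : ℕ, (0 ≤ y ∧ y < 2^(n+1)) → ¬ P y L := by
      intro y
      by_cases hy : 0 ≤ y ∧ y < 2^(n+1)
      · obtain ⟨L, hL⟩ := hc y hy.1 hy.2
        exact ⟨L, fun _ => hL⟩
      · exact ⟨0, fun hy' => absurd hy' hy⟩
    choose Fn hFn using hbad
    obtain ⟨y, hy0, hy1, hyP⟩ := stepA a hF n ((Finset.Icc (0:ℤ) (2^(n+1))).sup Fn)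
    refine hFn y ⟨hy0, hy1⟩ ?_
    exact mono y _ _ (Finset.le_sup (Finset.mem_Icc.mpr ⟨hy0, by omega⟩)) hyP
  obtain ⟨y, hy0, hy1, hyP⟩ := hgood
  have hstep : ∀ x : ℤ, x % 2^(n+1) = y % 2^(n+1) → a (x + 2^(n+1)) = -a x := by
    intro x hx
    have hyy : y % 2^(n+1) = y := Int.emod_eq_of_lt hy0 hy1
    have hna : |x| = (x.natAbs : ℤ) := Int.abs_eq_natAbs x
    have hq : (1:ℤ) ≤ 2^(n+1) := by
      have : (0:ℤ) < 2^(n+1) := by positivity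
      omega
    have hmul : (x.natAbs:ℤ) * 1 ≤ (x.natAbs:ℤ) * 2^(n+1) :=
      mul_le_mul_of_nonneg_left hq (by positivity)
    have h1 := le_abs_self x
    have h2 := neg_abs_le x
    refine hyP x.natAbs x (by rw [hx, hyy]) (by linarith) (by linarith)
  refine ⟨y, ?_⟩
  intro k
  induction k using Int.induction_on with
  | zero => simp
  | succ i ih =>
    rw [show y + ((i:ℤ)+1)*2^(n+1) = (y + i*2^(n+1)) + 2^(n+1) by ring,
      hstep _ (Int.add_mul_emod_self_right _ _ _), ih]
    by_cases hie : Even (i:ℤ)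
    · rw [if_pos hie, if_neg (by simpa [Int.even_add_one] using hie)]
    · rw [if_neg hie, if_pos (by simpa [Int.even_add_one] using hie), neg_neg]
  | pred i ih =>
    have hstep' := hstep (y + (-(i:ℤ)-1)*2^(n+1)) (Int.add_mul_emod_self_right _ _ _)
    rw [show y + (-(i:ℤ)-1)*2^(n+1) + 2^(n+1) = y + (-(i:ℤ))*2^(n+1) by ring, ih] at hstep'
    by_cases hie : Even (i:ℤ)
    · rw [if_pos ((even_neg).mpr hie)] at hstep'
      rw [if_neg (show ¬ Even (-(i:ℤ)-1) by simpa [Int.even_sub, even_neg] using hie)]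
      linarith
    · rw [if_neg (fun h => hie ((even_neg).mp h))] at hstep'
      rw [if_pos (show Even (-(i:ℤ)-1) by simpa [Int.even_sub, even_neg] using hie)]
      linarith

theorem statement4 (a : ℤ → ℤ) (hpm : PM a) :
    (∀ T : List ℤ, IsSubword a T → IsFiniteFold T) ↔
      ∀ n : ℕ, ∃ hn : ℤ, AltProp a n hn := by
  constructor
  · intro hF n
    exact main_mp a hF n
  · intro hA T hT
    exact main_mpr a hpm hA T hT
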